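/- For every integer N ≥ 1 and every k with 1 ≤ k ≤ N-1, the transition matrices of the k-ball Ehrenfest model satisfy the recurrence (k - N)·J_{k+1} = k·J_{k-1} - N·J_1·J_k, where J_1·J_k denotes the matrix product and J_0 is the identity matrix. -/

import Mathlib

/-- The transition matrix `J_k` of the `k`-ball Ehrenfest model:
`(J_k)_{i,j} = C(i,k-ℓ)·C(N-i,ℓ)/C(N,k)` whenever `j = i - k + 2ℓ` with `0 ≤ ℓ ≤ k`,
and zero otherwise. -/
noncomputable def kBall (N k : ℕ) : Matrix (Fin (N + 1)) (Fin (N + 1)) ℝ :=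
  fun i j =>
    ∑ ℓ ∈ Finset.range (k + 1),
      if (j : ℤ) = (i : ℤ) - (k : ℤ) + 2 * (ℓ : ℤ) then
        (((i : ℕ).choose (k - ℓ) * (N - (i : ℕ)).choose ℓ : ℕ) : ℝ) / (N.choose k : ℝ)
      else 0


lemma hP1 (a m : ℕ) : a * Nat.choose (a-1) m = (m+1) * Nat.choose a (m+1) := by
  cases a with
  | zero => simp
  | succ a =>
    rw [Nat.succ_sub_one, mul_comm (m+1)]
    exact (Nat.add_one_mul_choose_eq a m).trans rfl

lemma key (a b m ℓ c : ℕ) (hc : c + (m+ℓ+1) = a+b+1) :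
    a * Nat.choose (a-1) m * Nat.choose (b+1) (ℓ+1)
      + b * Nat.choose (a+1) (m+1) * Nat.choose (b-1) ℓ
    = (m+ℓ+2) * Nat.choose a (m+1) * Nat.choose b (ℓ+1)
      + c * Nat.choose a m * Nat.choose b ℓ := by
  rw [hP1 a m]
  rw [show b * Nat.choose (a+1) (m+1) * Nat.choose (b-1) ℓ
      = Nat.choose (a+1) (m+1) * (b * Nat.choose (b-1) ℓ) from by ring,
    hP1 b ℓ, Nat.choose_succ_succ b ℓ, Nat.choose_succ_succ a m]
  rcases le_or_gt m a with hm | hm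
  · rcases le_or_gt ℓ b with hl | hl
    · obtain ⟨a', rfl⟩ := Nat.exists_eq_add_of_le hm
      obtain ⟨b', rfl⟩ := Nat.exists_eq_add_of_le hl
      have hc' : c = a' + b' := by omega
      subst hc'
      have h1 : (m+1) * Nat.choose (m+a') (m+1) = a' * Nat.choose (m+a') m := by
        rw [mul_comm (m+1), Nat.choose_succ_right_eq, Nat.add_sub_cancel_left, mul_comm]
      have h2 : (ℓ+1) * Nat.choose (ℓ+b') (ℓ+1) = b' * Nat.choose (ℓ+b') ℓ := by
        rw [mul_comm (ℓ+1), Nat.choose_succ_right_eq, Nat.add_sub_cancel_left, mul_comm]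
      zify at h1 h2 ⊢
      linear_combination (Nat.choose (ℓ+b') ℓ : ℤ) * h1 + (Nat.choose (m+a') m : ℤ) * h2
    · have h1 : Nat.choose b ℓ = 0 := Nat.choose_eq_zero_of_lt hl
      have h2 : Nat.choose b (ℓ+1) = 0 := Nat.choose_eq_zero_of_lt (by omega)
      simp [h1, h2]
  · have h1 : Nat.choose a m = 0 := Nat.choose_eq_zero_of_lt hm
    have h2 : Nat.choose a (m+1) = 0 := Nat.choose_eq_zero_of_lt (by omega)
    simp [h1, h2]

lemma perL (N K i ℓ : ℕ) (hKN : K + 2 ≤ N) (hi : i ≤ N) (hl : ℓ ≤ K + 2) :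
    ((K:ℝ) + 1 - N) * (((i.choose (K+2-ℓ) * (N-i).choose ℓ : ℕ) : ℝ) / (N.choose (K+2) : ℝ))
    = ((K:ℝ)+1) * ((if 1 ≤ ℓ ∧ ℓ ≤ K+1 then ((i.choose (K+1-ℓ) * (N-i).choose (ℓ-1) : ℕ):ℝ) else 0) / (N.choose K : ℝ))
    - ( (i:ℝ) * ((if ℓ ≤ K+1 then (((i-1).choose (K+1-ℓ) * (N-i+1).choose ℓ : ℕ):ℝ) else 0) / (N.choose (K+1) : ℝ))
      + ((N:ℝ)-(i:ℝ)) * ((if 1 ≤ ℓ then (((i+1).choose (K+2-ℓ) * (N-i-1).choose (ℓ-1) : ℕ):ℝ) else 0) / (N.choose (K+1) : ℝ)) ) := by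
  have hD2 : (0:ℝ) < (N.choose (K+2) : ℝ) := by
    exact_mod_cast Nat.choose_pos (by omega)
  have hD1 : (0:ℝ) < (N.choose (K+1) : ℝ) := by
    exact_mod_cast Nat.choose_pos (by omega)
  have hD0 : (0:ℝ) < (N.choose K : ℝ) := by
    exact_mod_cast Nat.choose_pos (by omega)
  have r1 := Nat.choose_succ_right_eq N (K+1)
  have r2 := Nat.choose_succ_right_eq N K
  have r1' : (N.choose (K+2) : ℝ) * (K+2) = (N.choose (K+1) : ℝ) * ((N:ℝ)-K-1) := by
    have := congrArg (fun n : ℕ => (n:ℝ)) r1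
    push_cast [Nat.cast_sub (show K+1 ≤ N by omega)] at this
    linarith [this]
  have r2' : (N.choose (K+1) : ℝ) * (K+1) = (N.choose K : ℝ) * ((N:ℝ)-K) := by
    have := congrArg (fun n : ℕ => (n:ℝ)) r2
    push_cast [Nat.cast_sub (show K ≤ N by omega)] at this
    linarith [this]
  rcases ℓ with _ | ℓ'
  · simp only [show ¬((1:ℕ) ≤ 0) from by omega, Nat.not_succ_le_zero, Nat.le_zero, and_false, false_and, if_false,
      Nat.zero_le, if_true, Nat.sub_zero, Nat.choose_zero_right, mul_one]
    have e := hP1 i (K+1)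
    have e' : (i:ℝ) * ((i-1).choose (K+1) : ℝ) = ((K:ℝ)+2) * (i.choose (K+2) : ℝ) := by
      have := congrArg (fun n : ℕ => (n:ℝ)) e
      push_cast at this
      linarith [this]
    push_cast
    field_simp
    linear_combination (N.choose K : ℝ) * (((N.choose (K+2):ℝ)) * e' + ((i.choose (K+2):ℝ)) * r1')
  · rcases le_or_gt ℓ' K with hl' | hl'
    · simp only [show 1 ≤ ℓ'+1 from by omega, show ℓ'+1 ≤ K+1 from by omega, and_true,
        true_and, if_true, if_pos, Nat.succ_sub_one]
      have e := key i (N-i) (K-ℓ') ℓ' (N-K) (by omega)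
      rw [show K-ℓ'+ℓ'+2 = K+2 from by omega] at e
      have e' : (i:ℝ) * ((i-1).choose (K-ℓ') : ℝ) * ((N-i+1).choose (ℓ'+1) : ℝ)
          + ((N:ℝ)-i) * ((i+1).choose (K-ℓ'+1) : ℝ) * ((N-i-1).choose ℓ' : ℝ)
          = ((K:ℝ)+2) * (i.choose (K-ℓ'+1) : ℝ) * ((N-i).choose (ℓ'+1) : ℝ)
          + ((N:ℝ)-K) * (i.choose (K-ℓ') : ℝ) * ((N-i).choose ℓ' : ℝ) := by
        have := congrArg (fun n : ℕ => (n:ℝ)) e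
        push_cast [Nat.cast_sub (show i ≤ N from hi), Nat.cast_sub (show K ≤ N from by omega)] at this
        linarith [this]
      rw [show K+2-(ℓ'+1) = K-ℓ'+1 from by omega, show K+1-(ℓ'+1) = K-ℓ' from by omega]
      push_cast
      field_simp
      linear_combination (((N.choose (K+2):ℝ)) * ((N.choose K : ℝ))) * e'
        + ((i.choose (K-ℓ'+1) : ℝ)) * (((N-i).choose (ℓ'+1) : ℝ)) * ((N.choose K : ℝ)) * r1'
        - ((i.choose (K-ℓ') : ℝ)) * (((N-i).choose ℓ' : ℝ)) * ((N.choose (K+2) : ℝ)) * r2'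
    · have hl2 : ℓ' + 1 = K + 2 := by omega
      obtain rfl : ℓ' = K+1 := by omega
      simp only [show ¬(K+1+1 ≤ K+1) from by omega, if_neg, if_false,
        show ¬(1 ≤ K+1+1 ∧ K+1+1 ≤ K+1) from by omega, show (1:ℕ) ≤ K+1+1 from by omega, if_true,
        show K+2-(K+1+1) = 0 from by omega, show K+1+1-1 = K+1 from by omega,
        Nat.choose_zero_right, one_mul, and_false]
      have e := hP1 (N-i) (K+1)
      have e' : ((N:ℝ)-i) * ((N-i-1).choose (K+1) : ℝ) = ((K:ℝ)+2) * ((N-i).choose (K+2) : ℝ) := by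
        have := congrArg (fun n : ℕ => (n:ℝ)) e
        push_cast [Nat.cast_sub hi] at this
        linarith [this]
      push_cast
      field_simp
      linear_combination (N.choose K : ℝ) * (((N.choose (K+2):ℝ)) * e' + (((N-i).choose (K+2):ℝ)) * r1')

lemma master (N K : ℕ) (i j : ℤ) (hKN : K + 2 ≤ N) (iN : ℕ) (hiN : (iN : ℤ) = i) (hi : iN ≤ N) :
    ((K:ℝ) + 1 - N) *
      (∑ ℓ ∈ Finset.range (K+3),
        if j = i - ((K:ℤ)+2) + 2*(ℓ:ℤ) then
          ((iN.choose (K+2-ℓ) * (N-iN).choose ℓ : ℕ) : ℝ) / (N.choose (K+2) : ℝ) else 0)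
    = ((K:ℝ)+1) *
      (∑ ℓ ∈ Finset.range (K+1),
        if j = i - (K:ℤ) + 2*(ℓ:ℤ) then
          ((iN.choose (K-ℓ) * (N-iN).choose ℓ : ℕ) : ℝ) / (N.choose K : ℝ) else 0)
    - ( (iN:ℝ) *
      (∑ ℓ ∈ Finset.range (K+2),
        if j = i - 1 - ((K:ℤ)+1) + 2*(ℓ:ℤ) then
          (((iN-1).choose (K+1-ℓ) * (N-iN+1).choose ℓ : ℕ) : ℝ) / (N.choose (K+1) : ℝ) else 0)
      + ((N:ℝ)-(iN:ℝ)) *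
      (∑ ℓ ∈ Finset.range (K+2),
        if j = i + 1 - ((K:ℤ)+1) + 2*(ℓ:ℤ) then
          (((iN+1).choose (K+1-ℓ) * (N-iN-1).choose ℓ : ℕ) : ℝ) / (N.choose (K+1) : ℝ) else 0) ) := by
  subst hiN
  -- rewrite S2 as guarded sum over range (K+3)
  have h2 : (∑ ℓ ∈ Finset.range (K+1),
        if (j:ℤ) = (iN:ℤ) - (K:ℤ) + 2*(ℓ:ℤ) then
          ((iN.choose (K-ℓ) * (N-iN).choose ℓ : ℕ) : ℝ) / (N.choose K : ℝ) else 0)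
      = ∑ ℓ ∈ Finset.range (K+3),
        if (j:ℤ) = (iN:ℤ) - ((K:ℤ)+2) + 2*(ℓ:ℤ) then
          (if 1 ≤ ℓ ∧ ℓ ≤ K+1 then ((iN.choose (K+1-ℓ) * (N-iN).choose (ℓ-1) : ℕ):ℝ) else 0) / (N.choose K : ℝ) else 0 := by
    rw [Finset.sum_range_succ' _ (K+2), Finset.sum_range_succ _ (K+1)]
    simp only [show ¬(1 ≤ 0 ∧ 0 ≤ K+1) from by omega, if_false, ite_self, add_zero,
      show ¬(K+1+1 ≤ K+1) from by omega, and_false, zero_div]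
    apply Finset.sum_congr rfl
    intro ℓ hℓ
    rw [Finset.mem_range] at hℓ
    rw [if_congr (show ((j:ℤ) = (iN:ℤ) - ((K:ℤ)+2) + 2*((ℓ+1:ℕ):ℤ)) ↔ ((j:ℤ) = (iN:ℤ) - (K:ℤ) + 2*(ℓ:ℤ)) from by push_cast; constructor <;> intro h <;> omega) rfl rfl]
    rw [if_pos (show 1 ≤ ℓ+1 ∧ ℓ+1 ≤ K+1 from by omega)]
    rw [show K+1-(ℓ+1) = K-ℓ from by omega, show ℓ+1-1 = ℓ from by omega]
  -- S3
  have h3 : (∑ ℓ ∈ Finset.range (K+2),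
        if (j:ℤ) = (iN:ℤ) - 1 - ((K:ℤ)+1) + 2*(ℓ:ℤ) then
          (((iN-1).choose (K+1-ℓ) * (N-iN+1).choose ℓ : ℕ) : ℝ) / (N.choose (K+1) : ℝ) else 0)
      = ∑ ℓ ∈ Finset.range (K+3),
        if (j:ℤ) = (iN:ℤ) - ((K:ℤ)+2) + 2*(ℓ:ℤ) then
          (if ℓ ≤ K+1 then (((iN-1).choose (K+1-ℓ) * (N-iN+1).choose ℓ : ℕ):ℝ) else 0) / (N.choose (K+1) : ℝ) else 0 := by
    rw [Finset.sum_range_succ _ (K+2)]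
    simp only [show ¬(K+2 ≤ K+1) from by omega, if_false, zero_div, ite_self, add_zero]
    apply Finset.sum_congr rfl
    intro ℓ hℓ
    rw [Finset.mem_range] at hℓ
    rw [if_congr (show ((j:ℤ) = (iN:ℤ) - ((K:ℤ)+2) + 2*(ℓ:ℤ)) ↔ ((j:ℤ) = (iN:ℤ) - 1 - ((K:ℤ)+1) + 2*(ℓ:ℤ)) from by constructor <;> intro h <;> omega) rfl rfl]
    rw [if_pos (show ℓ ≤ K+1 from by omega)]
  -- S4
  have h4 : (∑ ℓ ∈ Finset.range (K+2),
        if (j:ℤ) = (iN:ℤ) + 1 - ((K:ℤ)+1) + 2*(ℓ:ℤ) then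
          (((iN+1).choose (K+1-ℓ) * (N-iN-1).choose ℓ : ℕ) : ℝ) / (N.choose (K+1) : ℝ) else 0)
      = ∑ ℓ ∈ Finset.range (K+3),
        if (j:ℤ) = (iN:ℤ) - ((K:ℤ)+2) + 2*(ℓ:ℤ) then
          (if 1 ≤ ℓ then (((iN+1).choose (K+2-ℓ) * (N-iN-1).choose (ℓ-1) : ℕ):ℝ) else 0) / (N.choose (K+1) : ℝ) else 0 := by
    rw [Finset.sum_range_succ' _ (K+2)]
    simp only [show ¬((1:ℕ) ≤ 0) from by omega, if_false, ite_self, add_zero, zero_div]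
    apply Finset.sum_congr rfl
    intro ℓ hℓ
    rw [Finset.mem_range] at hℓ
    rw [if_congr (show ((j:ℤ) = (iN:ℤ) - ((K:ℤ)+2) + 2*((ℓ+1:ℕ):ℤ)) ↔ ((j:ℤ) = (iN:ℤ) + 1 - ((K:ℤ)+1) + 2*(ℓ:ℤ)) from by push_cast; constructor <;> intro h <;> omega) rfl rfl]
    rw [if_pos (show 1 ≤ ℓ+1 from by omega)]
    rw [show K+2-(ℓ+1) = K+1-ℓ from by omega, show ℓ+1-1 = ℓ from by omega]
  rw [h2, h3, h4]
  rw [Finset.mul_sum, Finset.mul_sum, Finset.mul_sum, Finset.mul_sum,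
    ← Finset.sum_add_distrib, ← Finset.sum_sub_distrib]
  apply Finset.sum_congr rfl
  intro ℓ hℓ
  rw [Finset.mem_range] at hℓ
  by_cases hc : (j:ℤ) = (iN:ℤ) - ((K:ℤ)+2) + 2*(ℓ:ℤ)
  · simp only [if_pos hc]
    exact perL N K iN ℓ hKN hi (by omega)
  · simp only [if_neg hc, mul_zero, add_zero, sub_zero]


lemma collapse (N : ℕ) (c : ℤ) (f : Fin (N+1) → ℝ) :
    ∑ m : Fin (N+1), (if (m:ℤ) = c then f m else 0)
    = if h : 0 ≤ c ∧ c ≤ N then f ⟨c.toNat, by omega⟩ else 0 := by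
  split
  · rename_i h
    have : ∀ m : Fin (N+1), ((m:ℤ) = c) ↔ (m = ⟨c.toNat, by omega⟩) := by
      intro m
      constructor
      · intro hm; apply Fin.ext; simp only [Fin.val_mk]; omega
      · intro hm; subst hm; simp; omega
    rw [Finset.sum_congr rfl (fun m _ => by rw [if_congr (this m) rfl rfl])]
    rw [Finset.sum_ite_eq' Finset.univ _ f]
    simp
  · rename_i h
    apply Finset.sum_eq_zero
    intro m _
    rw [if_neg]
    intro hm
    have h1 : (m:ℕ) ≤ N := by omega
    omega

lemma kB_eq (N t : ℕ) (j : Fin (N+1)) (m : Fin (N+1)) (v : ℕ) (hv : (m:ℕ) = v) :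
    kBall N t m j = ∑ ℓ ∈ Finset.range (t + 1),
      if (j : ℤ) = (v : ℤ) - (t : ℤ) + 2 * (ℓ : ℤ) then
        ((v.choose (t - ℓ) * (N - v).choose ℓ : ℕ) : ℝ) / (N.choose t : ℝ)
      else 0 := by
  subst hv; rfl


lemma expand1 (N K : ℕ) (hN : 1 ≤ N) (i j m : Fin (N+1)) :
    kBall N 1 i m * kBall N (K+1) m j
    = (if (m:ℤ) = (i:ℤ) - 1 then ((i:ℕ):ℝ)/N * kBall N (K+1) m j else 0)
    + (if (m:ℤ) = (i:ℤ) + 1 then (((N-(i:ℕ)):ℕ):ℝ)/N * kBall N (K+1) m j else 0) := by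
  have h1 : kBall N 1 i m
      = (if (m:ℤ) = (i:ℤ) - 1 then ((i:ℕ):ℝ)/N else 0)
      + (if (m:ℤ) = (i:ℤ) + 1 then (((N-(i:ℕ)):ℕ):ℝ)/N else 0) := by
    simp only [kBall, Finset.sum_range_succ, Finset.sum_range_one]
    norm_num [Nat.choose_one_right]
    rw [show (i:ℤ) - 1 + 2 = (i:ℤ) + 1 from by ring]
  rw [h1, add_mul, ite_mul, ite_mul]
  simp

lemma hprod (N K : ℕ) (hN : 2 ≤ N) (i j : Fin (N+1)) :
    (N:ℝ) * ∑ m : Fin (N+1), kBall N 1 i m * kBall N (K+1) m j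
    = ((i:ℕ):ℝ) *
      (∑ ℓ ∈ Finset.range (K+2),
        if (j:ℤ) = (i:ℤ) - 1 - ((K:ℤ)+1) + 2*(ℓ:ℤ) then
          ((((i:ℕ)-1).choose (K+1-ℓ) * (N-(i:ℕ)+1).choose ℓ : ℕ) : ℝ) / (N.choose (K+1) : ℝ) else 0)
      + ((N:ℝ)-((i:ℕ):ℝ)) *
      (∑ ℓ ∈ Finset.range (K+2),
        if (j:ℤ) = (i:ℤ) + 1 - ((K:ℤ)+1) + 2*(ℓ:ℤ) then
          ((((i:ℕ)+1).choose (K+1-ℓ) * (N-(i:ℕ)-1).choose ℓ : ℕ) : ℝ) / (N.choose (K+1) : ℝ) else 0) := by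
  have hNR : (0:ℝ) < (N:ℝ) := by positivity
  rw [Finset.sum_congr rfl (fun m _ => expand1 N K (by omega) i j m), Finset.sum_add_distrib,
    collapse N ((i:ℤ)-1) _, collapse N ((i:ℤ)+1) _]
  have hiN : (i:ℕ) ≤ N := by omega
  rcases Nat.eq_zero_or_pos (i:ℕ) with hi0 | hip
  · rw [dif_neg (by omega), dif_pos (by omega)]
    rw [kB_eq N (K+1) j _ ((i:ℕ)+1) (by simp only [Fin.val_mk]; omega)]
    have c4 : (∑ ℓ ∈ Finset.range (K+2),
        if (j:ℤ) = (((i:ℕ)+1 : ℕ):ℤ) - ((K+1:ℕ):ℤ) + 2*(ℓ:ℤ) then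
          ((((i:ℕ)+1).choose (K+1-ℓ) * (N-((i:ℕ)+1)).choose ℓ : ℕ) : ℝ) / (N.choose (K+1) : ℝ) else 0)
        = (∑ ℓ ∈ Finset.range (K+2),
        if (j:ℤ) = (i:ℤ) + 1 - ((K:ℤ)+1) + 2*(ℓ:ℤ) then
          ((((i:ℕ)+1).choose (K+1-ℓ) * (N-(i:ℕ)-1).choose ℓ : ℕ) : ℝ) / (N.choose (K+1) : ℝ) else 0) := by
      apply Finset.sum_congr rfl
      intro ℓ _
      rw [show N-((i:ℕ)+1) = N-(i:ℕ)-1 from by omega]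
      exact if_congr (by constructor <;> intro h <;> omega) rfl rfl
    rw [c4, hi0]
    push_cast
    field_simp
    rw [Nat.sub_zero]
    ring
  · rcases Nat.lt_or_ge (i:ℕ) N with hiN' | hiN'
    · rw [dif_pos (by omega), dif_pos (by omega)]
      rw [kB_eq N (K+1) j _ ((i:ℕ)-1) (by simp only [Fin.val_mk]; omega),
        kB_eq N (K+1) j _ ((i:ℕ)+1) (by simp only [Fin.val_mk]; omega)]
      have c3 : (∑ ℓ ∈ Finset.range (K+2),
          if (j:ℤ) = (((i:ℕ)-1 : ℕ):ℤ) - ((K+1:ℕ):ℤ) + 2*(ℓ:ℤ) then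
            ((((i:ℕ)-1).choose (K+1-ℓ) * (N-((i:ℕ)-1)).choose ℓ : ℕ) : ℝ) / (N.choose (K+1) : ℝ) else 0)
          = (∑ ℓ ∈ Finset.range (K+2),
          if (j:ℤ) = (i:ℤ) - 1 - ((K:ℤ)+1) + 2*(ℓ:ℤ) then
            ((((i:ℕ)-1).choose (K+1-ℓ) * (N-(i:ℕ)+1).choose ℓ : ℕ) : ℝ) / (N.choose (K+1) : ℝ) else 0) := by
        apply Finset.sum_congr rfl
        intro ℓ _
        rw [show N-((i:ℕ)-1) = N-(i:ℕ)+1 from by omega]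
        exact if_congr (by constructor <;> intro h <;> omega) rfl rfl
      have c4 : (∑ ℓ ∈ Finset.range (K+2),
          if (j:ℤ) = (((i:ℕ)+1 : ℕ):ℤ) - ((K+1:ℕ):ℤ) + 2*(ℓ:ℤ) then
            ((((i:ℕ)+1).choose (K+1-ℓ) * (N-((i:ℕ)+1)).choose ℓ : ℕ) : ℝ) / (N.choose (K+1) : ℝ) else 0)
          = (∑ ℓ ∈ Finset.range (K+2),
          if (j:ℤ) = (i:ℤ) + 1 - ((K:ℤ)+1) + 2*(ℓ:ℤ) then
            ((((i:ℕ)+1).choose (K+1-ℓ) * (N-(i:ℕ)-1).choose ℓ : ℕ) : ℝ) / (N.choose (K+1) : ℝ) else 0) := by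
        apply Finset.sum_congr rfl
        intro ℓ _
        rw [show N-((i:ℕ)+1) = N-(i:ℕ)-1 from by omega]
        exact if_congr (by constructor <;> intro h <;> omega) rfl rfl
      rw [c3, c4]
      rw [Nat.cast_sub hiN]
      field_simp
    · have hiN2 : (i:ℕ) = N := by omega
      rw [dif_pos (by omega), dif_neg (by omega)]
      rw [kB_eq N (K+1) j _ ((i:ℕ)-1) (by simp only [Fin.val_mk]; omega)]
      have c3 : (∑ ℓ ∈ Finset.range (K+2),
          if (j:ℤ) = (((i:ℕ)-1 : ℕ):ℤ) - ((K+1:ℕ):ℤ) + 2*(ℓ:ℤ) then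
            ((((i:ℕ)-1).choose (K+1-ℓ) * (N-((i:ℕ)-1)).choose ℓ : ℕ) : ℝ) / (N.choose (K+1) : ℝ) else 0)
          = (∑ ℓ ∈ Finset.range (K+2),
          if (j:ℤ) = (i:ℤ) - 1 - ((K:ℤ)+1) + 2*(ℓ:ℤ) then
            ((((i:ℕ)-1).choose (K+1-ℓ) * (N-(i:ℕ)+1).choose ℓ : ℕ) : ℝ) / (N.choose (K+1) : ℝ) else 0) := by
        apply Finset.sum_congr rfl
        intro ℓ _
        rw [show N-((i:ℕ)-1) = N-(i:ℕ)+1 from by omega]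
        exact if_congr (by constructor <;> intro h <;> omega) rfl rfl
      rw [c3]
      rw [show ((i:ℕ):ℝ) = (N:ℝ) from by exact_mod_cast hiN2]
      field_simp
      ring


/-- the `k`-ball transition matrices satisfy
`(k - N)·J_{k+1} = k·J_{k-1} - N·J_1·J_k` for `1 ≤ k ≤ N-1`, where `J_0` is the
identity matrix. -/
theorem kBall_recurrence (N k : ℕ) (hN : 1 ≤ N) (hk : 1 ≤ k) (hkN : k ≤ N - 1) :
    kBall N 0 = 1
    ∧ ((k : ℝ) - (N : ℝ)) • kBall N (k + 1)
      = (k : ℝ) • kBall N (k - 1) - (N : ℝ) • (kBall N 1 * kBall N k) := by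
  obtain ⟨K, rfl⟩ : ∃ K, k = K + 1 := ⟨k - 1, by omega⟩
  have hKN2 : K + 2 ≤ N := by omega
  constructor
  · ext i j
    by_cases h : i = j
    · subst h
      simp [kBall, Matrix.one_apply]
    · rw [Matrix.one_apply_ne (Ne.symm (fun hh => h hh.symm))]
      simp only [kBall, zero_add, Finset.sum_range_one]
      have hcond : ¬((j:ℤ) = (i:ℤ) - ((0:ℕ):ℤ) + 2*((0:ℕ):ℤ)) := by
        intro hh
        exact h (Fin.ext (by omega))
      rw [if_neg hcond]
  · ext i j
    simp only [Matrix.smul_apply, Matrix.sub_apply, smul_eq_mul, Matrix.mul_apply]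
    rw [hprod N K (by omega) i j]
    rw [show K + 1 - 1 = K from rfl]
    have M := master N K (i:ℤ) (j:ℤ) hKN2 (i:ℕ) (by simp) (by omega)
    rw [kB_eq N (K+1+1) j i (i:ℕ) rfl, kB_eq N K j i (i:ℕ) rfl]
    have c1 : (∑ ℓ ∈ Finset.range (K+1+1+1),
        if (j:ℤ) = ((i:ℕ):ℤ) - ((K+1+1:ℕ):ℤ) + 2*(ℓ:ℤ) then
          (((i:ℕ).choose (K+1+1-ℓ) * (N-(i:ℕ)).choose ℓ : ℕ) : ℝ) / (N.choose (K+1+1) : ℝ) else 0)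
        = (∑ ℓ ∈ Finset.range (K+3),
        if (j:ℤ) = ((i:ℕ):ℤ) - ((K:ℤ)+2) + 2*(ℓ:ℤ) then
          (((i:ℕ).choose (K+2-ℓ) * (N-(i:ℕ)).choose ℓ : ℕ) : ℝ) / (N.choose (K+2) : ℝ) else 0) := by
      apply Finset.sum_congr rfl
      intro ℓ _
      exact if_congr (by constructor <;> intro hh <;> omega) rfl rfl
    rw [c1]
    rw [show ((K+1:ℕ):ℝ) = (K:ℝ)+1 from by push_cast; ring]
    exact M
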